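/- Let φ₁, φ₂, … ∈ ℚ[z] satisfy φ₁(z+1) − φ₁(z) = 1 and, for every k ≥ 2, φ_k(z+2) − 2·φ_k(z+1) + φ_k(z) = φ_{k−1}(z). Then for every k ≥ 1 the Casoratian with the constant function 1 adjoined satisfies C(φ₁,…,φ_k, 1) = (−1)^k · C(φ₁,…,φ_{k−1}), where C(φ₁,…,φ₀) is understood as 1. -/

import Mathlib

open Polynomial

noncomputable def polyCasoratian {m : ℕ} (f : Fin m → Polynomial ℚ) : Polynomial ℚ :=
  Matrix.det (Matrix.of fun i j : Fin m => (f i).comp (X + ((j : ℕ) : Polynomial ℚ)))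

noncomputable def dOp (g : Polynomial ℚ) : Polynomial ℚ := g.comp (X + 1) - g

lemma comp_X_add (g : Polynomial ℚ) (n : ℕ) :
    (g.comp (X + 1)).comp (X + (n : Polynomial ℚ)) = g.comp (X + ((n + 1 : ℕ) : Polynomial ℚ)) := by
  rw [Polynomial.comp_assoc]
  congr 1
  simp [add_comp]
  ring

lemma dOp_comp_add_nat (g : Polynomial ℚ) (n : ℕ) :
    (dOp g).comp (X + (n : Polynomial ℚ)) =
      g.comp (X + ((n + 1 : ℕ) : Polynomial ℚ)) - g.comp (X + (n : Polynomial ℚ)) := by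
  rw [dOp, sub_comp, comp_X_add]

lemma dOp_dOp (g : Polynomial ℚ) :
    dOp (dOp g) = g.comp (X + 2) - 2 * g.comp (X + 1) + g := by
  unfold dOp
  rw [sub_comp, Polynomial.comp_assoc]
  have h : (X + 1 : Polynomial ℚ).comp (X + 1) = X + 2 := by
    simp [add_comp]; ring
  rw [h]; ring

lemma casL1 (k : ℕ) (f : Fin k → Polynomial ℚ) :
    polyCasoratian (Fin.snoc f (1 : Polynomial ℚ)) =
      (-1) ^ k * polyCasoratian (fun i => dOp (f i)) := by
  classical
  set M : Matrix (Fin (k+1)) (Fin (k+1)) (Polynomial ℚ) :=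
    Matrix.of (fun i j =>
      ((Fin.snoc f (1:Polynomial ℚ) : Fin (k+1) → Polynomial ℚ) i).comp
        (X + ((j : ℕ) : Polynomial ℚ))) with hM
  set B : Matrix (Fin (k+1)) (Fin (k+1)) (Polynomial ℚ) :=
    Matrix.of (fun l j =>
      (if l = j then 1 else 0) - (if (l:ℕ) + 1 = (j:ℕ) then 1 else 0)) with hB
  have hBtri : B.BlockTriangular id := by
    intro i j hij
    simp only [id_eq] at hij
    have h1 : i ≠ j := by intro h; subst h; exact lt_irrefl _ hij
    have h2 : (i:ℕ) + 1 ≠ (j:ℕ) := by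
      have : (j:ℕ) < (i:ℕ) := hij
      omega
    simp only [hB, Matrix.of_apply, if_neg h1, if_neg h2, sub_zero]
  have hBdet : B.det = 1 := by
    rw [Matrix.det_of_upperTriangular hBtri]
    apply Finset.prod_eq_one
    intro i _
    have : (i:ℕ) + 1 ≠ (i:ℕ) := by omega
    simp [hB, this]
  have hcol0 : ∀ i, (M * B) i 0 = M i 0 := by
    intro i
    rw [Matrix.mul_apply]
    have h : ∀ l : Fin (k+1), M i l * B l 0 = if l = 0 then M i 0 else 0 := by
      intro l
      by_cases h : l = 0
      · subst h
        simp [hB]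
      · have h2 : (l:ℕ) + 1 ≠ ((0 : Fin (k+1)):ℕ) := by simp
        simp [hB, h, h2]
    rw [Finset.sum_congr rfl fun l _ => h l]
    simp
  have hcolS : ∀ i (j : Fin k), (M * B) i j.succ = M i j.succ - M i j.castSucc := by
    intro i j
    rw [Matrix.mul_apply]
    have h : ∀ l : Fin (k+1), M i l * B l j.succ =
        (if l = j.succ then M i j.succ else 0) +
        (if l = j.castSucc then -(M i j.castSucc) else 0) := by
      intro l
      have hne : j.succ ≠ j.castSucc := by
        intro h
        have := congrArg (Fin.val) h
        simp at this
      by_cases h1 : l = j.succ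
      · subst h1
        have h2 : ((j.succ : Fin (k+1)):ℕ) + 1 ≠ ((j.succ : Fin (k+1)):ℕ) := by omega
        simp [hB, h2, hne]
      · by_cases h3 : l = j.castSucc
        · subst h3
          have h4 : ((j.castSucc : Fin (k+1)):ℕ) + 1 = ((j.succ : Fin (k+1)):ℕ) := by simp
          simp [hB, h1, h4, hne.symm]
        · have h5 : (l:ℕ) ≠ ((j : Fin k):ℕ) := by
            intro h
            apply h3
            apply Fin.ext
            simpa using h
          simp [hB, h1, h3, h5]
    rw [Finset.sum_congr rfl fun l _ => h l, Finset.sum_add_distrib,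
      Finset.sum_ite_eq' _ _ (fun _ => M i j.succ),
      Finset.sum_ite_eq' _ _ (fun _ => -(M i j.castSucc))]
    simp [sub_eq_add_neg]
  have hMlast : ∀ j : Fin (k+1), M (Fin.last k) j = 1 := by
    intro j
    simp [hM, Fin.snoc_last, one_comp]
  have hdetMB : (M * B).det =
      (-1 : Polynomial ℚ) ^ k *
        ((M * B).submatrix (Fin.last k).succAbove ((0 : Fin (k+1)).succAbove)).det := by
    rw [Matrix.det_succ_row (M * B) (Fin.last k)]
    rw [Finset.sum_eq_single 0]
    · rw [hcol0, hMlast]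
      simp [Fin.val_last]
    · intro j _ hj
      obtain ⟨j', rfl⟩ := Fin.eq_succ_of_ne_zero hj
      rw [hcolS, hMlast, hMlast]
      ring
    · simp
  have hsub : (M * B).submatrix (Fin.last k).succAbove ((0 : Fin (k+1)).succAbove)
      = Matrix.of (fun i j : Fin k => (dOp (f i)).comp (X + ((j:ℕ) : Polynomial ℚ))) := by
    ext i j
    simp only [Matrix.submatrix_apply, Fin.succAbove_last, Fin.succAbove_zero]
    rw [hcolS]
    simp only [hM, Matrix.of_apply, Fin.snoc_castSucc, Fin.coe_castSucc, Fin.val_succ]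
    rw [dOp_comp_add_nat]
  calc polyCasoratian (Fin.snoc f (1 : Polynomial ℚ)) = M.det := rfl
    _ = M.det * B.det := by rw [hBdet, mul_one]
    _ = (M * B).det := (Matrix.det_mul M B).symm
    _ = (-1 : Polynomial ℚ) ^ k *
        ((M * B).submatrix (Fin.last k).succAbove ((0 : Fin (k+1)).succAbove)).det := hdetMB
    _ = (-1) ^ k * polyCasoratian (fun i => dOp (f i)) := by rw [hsub]; rfl

lemma casL2 (k : ℕ) (g : Fin k → Polynomial ℚ) (c : Polynomial ℚ) :
    polyCasoratian (Fin.cons c g) = (-1) ^ k * polyCasoratian (Fin.snoc g c) := by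
  have hrot : ∀ i : Fin (k+1),
      (Fin.snoc g c : Fin (k+1) → Polynomial ℚ) i
        = (Fin.cons c g : Fin (k+1) → Polynomial ℚ) (finRotate (k+1) i) := by
    intro i
    induction i using Fin.lastCases with
    | last => simp
    | cast i =>
        rw [finRotate_succ_apply]
        have : (i.castSucc : Fin (k+1)) + 1 = i.succ := Fin.coeSucc_eq_succ
        rw [this]
        simp
  have hperm : polyCasoratian (Fin.snoc g c)
      = ((Matrix.of (fun i j : Fin (k+1) =>
          ((Fin.cons c g : Fin (k+1) → Polynomial ℚ) i).comp
            (X + ((j:ℕ) : Polynomial ℚ)))).submatrix (finRotate (k+1)) id).det := by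
    unfold polyCasoratian
    congr 1
    ext i j
    simp [hrot i]
  rw [hperm, Matrix.det_permute, sign_finRotate]
  simp only [Units.val_pow_eq_pow_val, Units.val_neg, Units.val_one, Int.cast_pow,
    Int.cast_neg, Int.cast_one]
  have hC : polyCasoratian (Fin.cons c g)
      = (Matrix.of (fun i j : Fin (k+1) =>
          ((Fin.cons c g : Fin (k+1) → Polynomial ℚ) i).comp
            (X + ((j:ℕ) : Polynomial ℚ)))).det := rfl
  rw [hC, ← mul_assoc, ← pow_add, Even.neg_one_pow ⟨k, by omega⟩, one_mul]

theorem casoratian_append_one (φ : ℕ → Polynomial ℚ)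
    (h1 : (φ 0).comp (X + 1) - φ 0 = 1)
    (h2 : ∀ k : ℕ,
      (φ (k + 1)).comp (X + 2) - 2 * (φ (k + 1)).comp (X + 1) + φ (k + 1) = φ k) :
    ∀ m : ℕ,
      polyCasoratian (Fin.snoc (fun i : Fin (m + 1) => φ i) (1 : Polynomial ℚ))
        = (-1) ^ (m + 1) * polyCasoratian (fun i : Fin m => φ i) := by
  intro m
  rw [casL1]
  have hsplit : (fun i : Fin (m+1) => dOp (φ i)) =
      Fin.cons (1 : Polynomial ℚ) (fun i : Fin m => dOp (φ (i + 1))) := by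
    funext i
    induction i using Fin.cases with
    | zero => simpa [dOp] using h1
    | succ i => simp
  rw [hsplit, casL2]
  have hlast : polyCasoratian (Fin.snoc (fun i : Fin m => dOp (φ (i + 1))) (1 : Polynomial ℚ))
      = (-1) ^ m * polyCasoratian (fun i : Fin m => φ i) := by
    rw [casL1]
    congr 1
    congr 1
    funext i
    rw [dOp_dOp]
    exact h2 i
  rw [hlast]
  have hmm : ((-1 : Polynomial ℚ)) ^ m * ((-1 : Polynomial ℚ)) ^ m = 1 := by
    rw [← pow_add]
    exact Even.neg_one_pow ⟨m, by ring⟩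
  rw [← mul_assoc ((-1 : Polynomial ℚ) ^ m), hmm, one_mul]
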